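/- In a network graph with the tree consistency property, let b, b₁, b₂ be distinct boundary vertices and suppose P(b,b₁) and P(b,b₂) both pass through a vertex x, and P(b,b₁) passes through edges e₁ = (x₁,x) and e₂ = (x,x₂) while P(b,b₂) does not contain both e₁ and e₂. Then P(b,b₂) contains e₁, does not contain e₂, and the two paths diverge exactly at x, i.e., x is the (b ≺ b₁,b₂)-junction. -/

import Mathlib

def WellFormed {V : Type} (E : V → V → Prop) (VB : Set V) (P : V → V → List V) : Prop :=
  ∀ b b', b ∈ VB → b' ∈ VB → b ≠ b' →
    (P b b').head? = some b ∧ (P b b').getLast? = some b' ∧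
    (P b b').Nodup ∧ List.Chain' E (P b b') ∧
    (∀ v ∈ P b b', v ∈ VB → v = b ∨ v = b')

def TreeConsistent {V : Type} (VB : Set V) (P : V → V → List V) : Prop :=
  ∀ b1 b1' b2 b2', b1 ∈ VB → b1' ∈ VB → b2 ∈ VB → b2' ∈ VB → b1 ≠ b1' → b2 ≠ b2' →
    ∃ c : List V, c <:+: P b1 b1' ∧ (c <:+: P b2 b2' ∨ c.reverse <:+: P b2 b2') ∧
      ∀ v, (v ∈ P b1 b1' ∧ v ∈ P b2 b2') ↔ v ∈ c

def IsSourceJunction {V : Type} (P : V → V → List V) (x b b1 b2 : V) : Prop :=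
  ∃ c y z : List V, P b b1 = c ++ y ∧ P b b2 = c ++ z ∧
    (∀ v ∈ y, v ∉ z) ∧ c.getLast? = some x

/-- A prefix agrees with the big list on indices below its length. -/
lemma prefix_getElem? {V : Type} {p l : List V} {k : ℕ}
    (h : p <+: l) (hk : k < p.length) : l[k]? = p[k]? := by
  obtain ⟨r, rfl⟩ := h
  rw [List.getElem?_append_left hk]

/-- An infix containing the head of a nodup list is a prefix. -/
lemma prefix_of_infix_head {V : Type} {l p : List V} {b : V}
    (hinf : p <:+: l) (hn : l.Nodup) (hh : l.head? = some b) (hbc : b ∈ p) :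
    p <+: l := by
  obtain ⟨s, t, rfl⟩ := hinf
  cases s with
  | nil => exact ⟨t, by simp⟩
  | cons a s' =>
    exfalso
    have hb' : a = b := by simpa using hh
    rw [List.append_assoc, List.nodup_append] at hn
    exact hn.2.2 _ (show b ∈ a :: s' from hb' ▸ List.mem_cons_self)
      _ (List.mem_append_left _ hbc) rfl

lemma infix_pair_of_getElem {V : Type} {l : List V} {a b : V} {n : ℕ}
    (h1 : l[n]? = some a) (h2 : l[n+1]? = some b) : [a, b] <:+: l := by
  obtain ⟨hn1, hb⟩ := List.getElem?_eq_some_iff.1 h2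
  have hn : n < l.length := Nat.lt_of_succ_lt hn1
  obtain ⟨_, ha⟩ := List.getElem?_eq_some_iff.1 h1
  refine ⟨l.take n, l.drop (n+2), ?_⟩
  have hd : l.drop n = a :: b :: l.drop (n + 2) := by
    rw [List.drop_eq_getElem_cons hn, List.drop_eq_getElem_cons hn1, ha, hb]
  calc l.take n ++ [a, b] ++ l.drop (n + 2)
      = l.take n ++ (a :: b :: l.drop (n + 2)) := by simp
    _ = l.take n ++ l.drop n := by rw [hd]
    _ = l := List.take_append_drop n l

lemma infix_triple_getElem {V : Type} {l : List V} {a b p : V}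
    (h : [a, b, p] <:+: l) :
    ∃ n, l[n]? = some a ∧ l[n+1]? = some b ∧ l[n+2]? = some p := by
  obtain ⟨s, t, rfl⟩ := h
  refine ⟨s.length, ?_, ?_, ?_⟩ <;>
    · rw [List.append_assoc, List.getElem?_append_right (by omega)]
      simp

/-- If `P(b,b₁)` traverses the edges `e₁ = (x₁,x)` and `e₂ = (x,x₂)`, and
`P(b,b₂)` passes through `x` but does not contain both `e₁` and `e₂`, then
`P(b,b₂)` contains `e₁`, does not contain `e₂`, and the two paths diverge
exactly at `x`, i.e. `x` is the `(b ≺ b₁,b₂)`-junction. -/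
theorem stmt_10 {V : Type} (E : V → V → Prop) (VB : Set V) (P : V → V → List V)
    (hwf : WellFormed E VB P) (htc : TreeConsistent VB P)
    (b b1 b2 : V) (hb : b ∈ VB) (hb1 : b1 ∈ VB) (hb2 : b2 ∈ VB)
    (hbb1 : b ≠ b1) (hbb2 : b ≠ b2) (hb12 : b1 ≠ b2)
    (x x1 x2 : V)
    (he : [x1, x, x2] <:+: P b b1)
    (hx2mem : x ∈ P b b2)
    (hnot : ¬ ([x1, x] <:+: P b b2 ∧ [x, x2] <:+: P b b2)) :
    [x1, x] <:+: P b b2 ∧ ¬ ([x, x2] <:+: P b b2) ∧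
      IsSourceJunction P x b b1 b2 := by
  obtain ⟨h1h, h1l, h1n, h1c, h1b⟩ := hwf b b1 hb hb1 hbb1
  obtain ⟨h2h, h2l, h2n, h2c, h2b⟩ := hwf b b2 hb hb2 hbb2
  obtain ⟨p, hc1, hc2, hcv⟩ := htc b b1 b b2 hb hb1 hb hb2 hbb1 hbb2
  set l1 := P b b1 with hl1
  set l2 := P b b2 with hl2
  have hbmem1 : b ∈ l1 := by
    rw [List.mem_iff_getElem?]; exact ⟨0, by rw [← List.head?_eq_getElem?]; exact h1h⟩
  have hbmem2 : b ∈ l2 := by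
    rw [List.mem_iff_getElem?]; exact ⟨0, by rw [← List.head?_eq_getElem?]; exact h2h⟩
  have hbc : b ∈ p := (hcv b).1 ⟨hbmem1, hbmem2⟩
  have hpre1 : p <+: l1 := prefix_of_infix_head hc1 h1n h1h hbc
  have hcne : p ≠ [] := List.ne_nil_of_mem hbc
  have hclen : 0 < p.length := List.length_pos_iff.2 hcne
  have hcnodup : p.Nodup := h1n.sublist hc1.sublist
  have hc0 : p[0]? = some b := by
    rw [← prefix_getElem? hpre1 hclen, ← List.head?_eq_getElem?]; exact h1h
  have hpre2 : p <+: l2 := by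
    rcases hc2 with h | h
    · exact prefix_of_infix_head h h2n h2h hbc
    · have hbrev : b ∈ p.reverse := by simpa using hbc
      have hp : p.reverse <+: l2 := prefix_of_infix_head h h2n h2h hbrev
      have hrlen : 0 < p.reverse.length := by simpa using hclen
      have hr0 : p.reverse[0]? = some b := by
        rw [← prefix_getElem? hp hrlen, ← List.head?_eq_getElem?]; exact h2h
      have hlast : p.getLast? = some b := by
        rw [← List.head?_reverse, List.head?_eq_getElem?]; exact hr0
      have h01 : (0 : ℕ) = p.length - 1 := by
        refine (List.getElem?_inj hclen hcnodup).1 ?_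
        rw [hc0, ← List.getLast?_eq_getElem?, hlast]
      have hlen1 : p.length = 1 := by omega
      obtain ⟨a, rfl⟩ := List.length_eq_one_iff.1 hlen1
      simpa using hp
  -- indices of the triple in l1
  obtain ⟨n, hn1, hn2, hn3⟩ := infix_triple_getElem he
  have hxmem1 : x ∈ l1 := he.sublist.subset (by simp)
  have hxc : x ∈ p := (hcv x).1 ⟨hxmem1, hx2mem⟩
  obtain ⟨k, hk⟩ := List.mem_iff_getElem?.1 hxc
  have hkl : k < p.length := (List.getElem?_eq_some_iff.1 hk).1
  have hkl1 : k < l1.length := by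
    have := prefix_getElem? hpre1 hkl
    exact (List.getElem?_eq_some_iff.1 (this.trans hk)).1
  have hkeq : k = n + 1 := by
    refine (List.getElem?_inj hkl1 h1n).1 ?_
    rw [prefix_getElem? hpre1 hkl, hk, hn2]
  subst hkeq
  have hncl : n < p.length := by omega
  have hcn : p[n]? = some x1 := by rw [← prefix_getElem? hpre1 hncl, hn1]
  -- x must be the last element of p
  have hklast : n + 1 + 1 = p.length := by
    rcases Nat.lt_or_ge (n + 1 + 1) p.length with hlt | hge
    · exfalso
      have hcn2 : p[n+1+1]? = some x2 := by rw [← prefix_getElem? hpre1 hlt, hn3]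
      refine hnot ⟨?_, ?_⟩
      · exact infix_pair_of_getElem
          (by rw [prefix_getElem? hpre2 hncl, hcn])
          (by rw [prefix_getElem? hpre2 hkl, hk])
      · exact infix_pair_of_getElem
          (by rw [prefix_getElem? hpre2 hkl, hk])
          (by rw [prefix_getElem? hpre2 hlt, hcn2])
    · omega
  have goal1 : [x1, x] <:+: l2 :=
    infix_pair_of_getElem
      (by rw [prefix_getElem? hpre2 hncl, hcn])
      (by rw [prefix_getElem? hpre2 hkl, hk])
  have goal2 : ¬ ([x, x2] <:+: l2) := by
    intro hcontra
    have hx2l2 : x2 ∈ l2 := hcontra.sublist.subset (by simp)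
    have hx2l1 : x2 ∈ l1 := he.sublist.subset (by simp)
    have hx2c : x2 ∈ p := (hcv x2).1 ⟨hx2l1, hx2l2⟩
    obtain ⟨j, hj⟩ := List.mem_iff_getElem?.1 hx2c
    have hjl : j < p.length := (List.getElem?_eq_some_iff.1 hj).1
    have hjl1 : j < l1.length := by
      have := prefix_getElem? hpre1 hjl
      exact (List.getElem?_eq_some_iff.1 (this.trans hj)).1
    have : j = n + 2 := by
      refine (List.getElem?_inj hjl1 h1n).1 ?_
      rw [prefix_getElem? hpre1 hjl, hj, hn3]
    omega
  refine ⟨goal1, goal2, ?_⟩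
  obtain ⟨y, hy⟩ := hpre1
  obtain ⟨z, hz⟩ := hpre2
  refine ⟨p, y, z, hy.symm, hz.symm, ?_, ?_⟩
  · intro v hvy hvz
    have hvl1 : v ∈ l1 := by rw [← hy]; exact List.mem_append_right _ hvy
    have hvl2 : v ∈ l2 := by rw [← hz]; exact List.mem_append_right _ hvz
    have hvc : v ∈ p := (hcv v).1 ⟨hvl1, hvl2⟩
    have := h1n
    rw [← hy, List.nodup_append] at this
    exact this.2.2 _ hvc _ hvy rfl
  · rw [List.getLast?_eq_getElem?]
    have : p.length - 1 = n + 1 := by omega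
    rw [this, hk]
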